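/- Let α ∈ (1,2), b > 0 and x ∈ ℝ. Then the improper integral lim_{T→∞} ∫_0^T cos(b(x−y))·y^{1−α} dy exists and equals (Γ(2−α)/b^{2−α})·( cos(bx)·cos(π(2−α)/2) + sin(bx)·sin(π(2−α)/2) ). -/

import Mathlib

open Filter Topology intervalIntegral MeasureTheory Set

namespace FracAux

/-- antiderivative of `exp (-(l*y))` vanishing at 0 -/
noncomputable def A (l : ℂ) (y : ℝ) : ℂ := (1 - Complex.exp (-(l * y))) / l

lemma norm_exp_neg_le {l : ℂ} (hl : 0 ≤ l.re) {y : ℝ} (hy : 0 ≤ y) :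
    ‖Complex.exp (-(l * y))‖ ≤ 1 := by
  rw [Complex.norm_exp]
  have : (-(l * y)).re = -(l.re * y) := by simp
  rw [this]
  exact Real.exp_le_one_iff.mpr (by nlinarith)

lemma hasDerivAt_A (l : ℂ) (hl : l ≠ 0) (y : ℝ) :
    HasDerivAt (A l) (Complex.exp (-(l * y))) y := by
  have h1 : HasDerivAt (fun t : ℝ => Complex.exp (-(l * t))) (-l * Complex.exp (-(l * y))) y := by
    have h2 : HasDerivAt (fun z : ℂ => Complex.exp (-(l * z))) (Complex.exp (-(l * y)) * (-l))
        (y : ℂ) := by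
      have h3 : HasDerivAt (fun z : ℂ => -(l * z)) (-l) (y : ℂ) := by
        simpa [Pi.neg_def] using ((hasDerivAt_id (y : ℂ)).const_mul l).neg
      exact (Complex.hasDerivAt_exp (-(l * y))).comp (y : ℂ) h3
    simpa [mul_comm] using h2.comp_ofReal
  have := ((h1.const_sub 1).div_const l)
  have heq : -(-l * Complex.exp (-(l * ↑y))) / l = Complex.exp (-(l * y)) := by
    field_simp
  rw [← heq]
  exact this

lemma A_eq_integral {l : ℂ} (hl : l ≠ 0) (y : ℝ) :
    A l y = ∫ t in (0:ℝ)..y, Complex.exp (-(l * t)) := by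
  have := integral_exp_mul_complex (a := 0) (b := y) (c := -l) (by simpa using hl)
  rw [A]
  simp only [neg_mul] at this ⊢
  rw [this]
  rw [div_eq_div_iff hl (neg_ne_zero.mpr hl)]
  simp
  ring

lemma norm_A_le {l : ℂ} (hl : 0 ≤ l.re) (hl0 : l ≠ 0) {y : ℝ} (hy : 0 ≤ y) :
    ‖A l y‖ ≤ min y (2 / ‖l‖) := by
  refine le_min ?_ ?_
  · rw [A_eq_integral hl0]
    have := intervalIntegral.norm_integral_le_of_norm_le_const
      (C := 1) (f := fun t : ℝ => Complex.exp (-(l * t))) (a := 0) (b := y) ?_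
    · simpa [abs_of_nonneg hy] using this
    · intro t ht
      rw [Set.uIoc_of_le hy] at ht
      exact norm_exp_neg_le hl ht.1.le
  · rw [A, norm_div]
    have h2 : ‖1 - Complex.exp (-(l * y))‖ ≤ 2 := by
      calc ‖1 - Complex.exp (-(l * y))‖ ≤ ‖(1:ℂ)‖ + ‖Complex.exp (-(l * y))‖ := norm_sub_le _ _
        _ ≤ 1 + 1 := by simpa using norm_exp_neg_le hl hy
        _ = 2 := by norm_num
    have hln : 0 < ‖l‖ := norm_pos_iff.mpr hl0
    rw [div_le_div_iff₀ hln (by positivity)]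
    calc ‖1 - Complex.exp (-(l * y))‖ * ‖l‖ ≤ 2 * ‖l‖ := by
          exact mul_le_mul_of_nonneg_right h2 (norm_nonneg _)
      _ = 2 * ‖l‖ := rfl

lemma norm_cpow_real {p : ℝ} {y : ℝ} (hy : 0 < y) : ‖(y:ℂ) ^ (p:ℂ)‖ = y ^ p := by
  rw [Complex.norm_cpow_eq_rpow_re_of_pos hy]
  simp

/-- derivative of `y ↦ (y:ℂ)^p` for `y > 0` -/
lemma hasDerivAt_cpow_real {p : ℂ} (hp : p ≠ 0) {y : ℝ} (hy : 0 < y) :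
    HasDerivAt (fun t : ℝ => (t:ℂ) ^ p) (p * (y:ℂ) ^ (p - 1)) y := by
  have h := hasDerivAt_ofReal_cpow_const' (x := y) hy.ne' (r := p - 1) (by
    intro h
    apply hp
    have : p = (p - 1) + 1 := by ring
    rw [this, h]; ring)
  rw [sub_add_cancel] at h
  have h2 := h.const_mul p
  have heq : (fun t : ℝ => p * ((t:ℂ) ^ p / p)) = fun t : ℝ => (t:ℂ) ^ p := by
    funext t; field_simp
  rw [heq] at h2
  simpa [mul_comm] using h2

/-- integrability of `y^p exp(-c y)` on `(0,∞)` -/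
lemma integrableOn_rpow_exp {p c : ℝ} (hp : -1 < p) (hc : 0 < c) :
    IntegrableOn (fun y : ℝ => y ^ p * Real.exp (-c * y)) (Ioi 0) := by
  have := integrableOn_rpow_mul_exp_neg_mul_rpow hp zero_lt_one hc
  simpa [Real.rpow_one] using this


lemma continuousOn_cpow_real (p : ℂ) :
    ContinuousOn (fun y : ℝ => (y:ℂ) ^ p) (Ioi 0) := fun y hy =>
  (Complex.continuousAt_ofReal_cpow_const y p (Or.inr (ne_of_gt hy))).continuousWithinAt

lemma continuous_exp_neg_mul (l : ℂ) :
    Continuous (fun y : ℝ => Complex.exp (-(l * y))) := by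
  fun_prop

lemma integrableOn_F {p : ℝ} (hp : -1 < p) {l : ℂ} (hl : 0 < l.re) :
    IntegrableOn (fun y : ℝ => (y:ℂ) ^ (p:ℂ) * Complex.exp (-(l * y))) (Ioi 0) := by
  apply Integrable.mono' (integrableOn_rpow_exp hp hl)
  · exact (((continuousOn_cpow_real _).mul (continuous_exp_neg_mul l).continuousOn)).aestronglyMeasurable measurableSet_Ioi
  · refine (ae_restrict_iff' measurableSet_Ioi).2 (Filter.Eventually.of_forall fun y hy => ?_)
    rw [norm_mul, norm_cpow_real hy]
    gcongr
    · exact Real.rpow_nonneg (le_of_lt hy) p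
    rw [Complex.norm_exp]
    apply Real.exp_le_exp.mpr
    simp [le_of_eq, mul_comm]

lemma integrable_bound {s b : ℝ} (hs0 : 0 < s) (hs1 : s < 1) (hb : 0 < b) :
    IntegrableOn (fun y : ℝ => y ^ (s - 2) * min y (2 / b)) (Ioi 0) := by
  have hc : (0:ℝ) < 2 / b := by positivity
  have hcont : ContinuousOn (fun y : ℝ => y ^ (s - 2) * min y (2 / b)) (Ioi 0) := by
    apply ContinuousOn.mul
    · exact fun y hy => (Real.continuousAt_rpow_const y _ (Or.inl (ne_of_gt hy))).continuousWithinAt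
    · exact (continuous_id.min continuous_const).continuousOn
  have h1 : IntegrableOn (fun y : ℝ => y ^ (s - 2) * min y (2 / b)) (Ioc 0 (2 / b)) := by
    apply Integrable.mono'
      ((intervalIntegrable_iff_integrableOn_Ioc_of_le hc.le).mp
        (intervalIntegrable_rpow' (by linarith : (-1:ℝ) < s - 1)))
    · exact (hcont.mono Ioc_subset_Ioi_self).aestronglyMeasurable measurableSet_Ioc
    · refine (ae_restrict_iff' measurableSet_Ioc).2 (Filter.Eventually.of_forall fun y hy => ?_)
      have hy0 : 0 < y := hy.1
      rw [Real.norm_eq_abs, abs_of_nonneg (by positivity)]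
      calc y ^ (s - 2) * min y (2 / b) ≤ y ^ (s - 2) * y := by
            gcongr; exact min_le_left _ _
        _ = y ^ (s - 1) := by
            rw [← Real.rpow_add_one hy0.ne' (s - 2)]; congr 1; ring
  have h2 : IntegrableOn (fun y : ℝ => y ^ (s - 2) * min y (2 / b)) (Ioi (2 / b)) := by
    apply Integrable.mono' ((integrableOn_Ioi_rpow_of_lt (by linarith : s - 2 < -1) hc).mul_const (2 / b))
    · exact (hcont.mono (Ioi_subset_Ioi hc.le)).aestronglyMeasurable measurableSet_Ioi
    · refine (ae_restrict_iff' measurableSet_Ioi).2 (Filter.Eventually.of_forall fun y hy => ?_)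
      have hy0 : (0:ℝ) < y := hc.trans hy
      rw [Real.norm_eq_abs, abs_of_nonneg (by positivity)]
      gcongr
      exact min_le_right _ _
  have := h1.union h2
  rwa [Ioc_union_Ioi_eq_Ioi hc.le] at this

lemma norm_G_le {s b : ℝ} {l : ℂ} (hb : 0 < b) (hl : 0 ≤ l.re) (hl0 : l ≠ 0)
    (hlb : b ≤ ‖l‖) {y : ℝ} (hy : 0 < y) :
    ‖(y:ℂ) ^ ((s:ℂ) - 2) * A l y‖ ≤ y ^ (s - 2) * min y (2 / b) := by
  rw [norm_mul]
  have hcast : ((s:ℂ) - 2) = ((s - 2 : ℝ) : ℂ) := by push_cast; ring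
  rw [hcast, norm_cpow_real hy]
  refine mul_le_mul_of_nonneg_left ?_ (by positivity)
  calc ‖A l y‖ ≤ min y (2 / ‖l‖) := norm_A_le hl hl0 hy.le
    _ ≤ min y (2 / b) := by
        apply min_le_min le_rfl
        gcongr

lemma integrableOn_G {s b : ℝ} (hs0 : 0 < s) (hs1 : s < 1) (hb : 0 < b) {l : ℂ}
    (hl : 0 ≤ l.re) (hl0 : l ≠ 0) (hlb : b ≤ ‖l‖) :
    IntegrableOn (fun y : ℝ => (y:ℂ) ^ ((s:ℂ) - 2) * A l y) (Ioi 0) := by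
  apply Integrable.mono' (integrable_bound hs0 hs1 hb)
  · apply ContinuousOn.aestronglyMeasurable _ measurableSet_Ioi
    apply (continuousOn_cpow_real _).mul
    exact (((continuous_const.sub (continuous_exp_neg_mul l)).div_const l).continuousOn)
  · exact (ae_restrict_iff' measurableSet_Ioi).2
      (Filter.Eventually.of_forall fun y hy => norm_G_le hb hl hl0 hlb hy)


lemma sub_one_ne_zero_c {s : ℝ} (hs1 : s < 1) : ((s:ℂ) - 1) ≠ 0 := by
  intro h
  have := congrArg Complex.re h
  simp at this
  linarith

lemma tendsto_small {s : ℝ} (hs0 : 0 < s) (hs1 : s < 1) (f : ℝ → ℂ)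
    (hle : ∀ y : ℝ, 0 < y → ‖f y‖ ≤ y ^ (s - 1))
    (hfi : ∀ c : ℝ, 0 < c → IntervalIntegrable f volume 0 c) :
    Tendsto (fun c => ∫ y in (0:ℝ)..c, f y) (𝓝[>] (0:ℝ)) (𝓝 0) := by
  rw [tendsto_zero_iff_norm_tendsto_zero]
  have hbound : ∀ᶠ c in 𝓝[>] (0:ℝ), ‖∫ y in (0:ℝ)..c, f y‖ ≤ c ^ s / s := by
    filter_upwards [self_mem_nhdsWithin] with c hc
    have hc0 : (0:ℝ) < c := hc
    have h1 : ‖∫ y in (0:ℝ)..c, f y‖ ≤ |∫ y in (0:ℝ)..c, y ^ (s - 1)| := by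
      apply intervalIntegral.norm_integral_le_abs_of_norm_le
        ?_ (intervalIntegrable_rpow' (by linarith))
      refine (ae_restrict_iff' measurableSet_uIoc).2 (Filter.Eventually.of_forall fun y hy => ?_)
      rw [uIoc_of_le hc0.le] at hy
      exact hle y hy.1
    have h2 : (∫ y in (0:ℝ)..c, y ^ (s - 1)) = c ^ s / s := by
      rw [integral_rpow (Or.inl (by linarith))]
      rw [show s - 1 + 1 = s by ring, Real.zero_rpow hs0.ne', sub_zero]
    rwa [h2, abs_of_nonneg (by positivity)] at h1
  have h0 : Tendsto (fun c : ℝ => c ^ s) (𝓝[>] (0:ℝ)) (𝓝 0) := by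
    have := (Real.continuousAt_rpow_const 0 s (Or.inr hs0.le)).tendsto
    rw [Real.zero_rpow hs0.ne'] at this
    exact this.mono_left nhdsWithin_le_nhds
  have htend : Tendsto (fun c : ℝ => c ^ s / s) (𝓝[>] (0:ℝ)) (𝓝 0) := by
    simpa using h0.div_const s
  exact squeeze_zero' (Filter.Eventually.of_forall fun c => norm_nonneg _) hbound htend

lemma norm_F_le {s : ℝ} {l : ℂ} (hl : 0 ≤ l.re) {y : ℝ} (hy : 0 < y) :
    ‖(y:ℂ) ^ ((s:ℂ) - 1) * Complex.exp (-(l * y))‖ ≤ y ^ (s - 1) := by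
  rw [norm_mul, show ((s:ℂ) - 1) = ((s - 1 : ℝ) : ℂ) by push_cast; ring, norm_cpow_real hy]
  calc y ^ (s - 1) * ‖Complex.exp (-(l * y))‖ ≤ y ^ (s - 1) * 1 :=
        mul_le_mul_of_nonneg_left (norm_exp_neg_le hl hy.le) (Real.rpow_nonneg hy.le _)
    _ = y ^ (s - 1) := mul_one _

lemma norm_G_le' {s b : ℝ} {l : ℂ} (hb : 0 < b) (hl : 0 ≤ l.re) (hl0 : l ≠ 0)
    {y : ℝ} (hy : 0 < y) :
    ‖(y:ℂ) ^ ((s:ℂ) - 2) * A l y‖ ≤ y ^ (s - 1) := by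
  rw [norm_mul, show ((s:ℂ) - 2) = ((s - 2 : ℝ) : ℂ) by push_cast; ring, norm_cpow_real hy]
  calc y ^ (s - 2) * ‖A l y‖ ≤ y ^ (s - 2) * y := by
        refine mul_le_mul_of_nonneg_left ?_ (Real.rpow_nonneg hy.le _)
        exact (norm_A_le hl hl0 hy.le).trans (min_le_left _ _)
    _ = y ^ (s - 1) := by rw [← Real.rpow_add_one hy.ne' (s - 2)]; congr 1; ring

lemma intervalIntegrable_F {s : ℝ} (hs0 : 0 < s) {l : ℂ} (hl : 0 ≤ l.re) {T : ℝ} (hT : 0 < T) :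
    IntervalIntegrable (fun y : ℝ => (y:ℂ) ^ ((s:ℂ) - 1) * Complex.exp (-(l * y)))
      volume 0 T := by
  rw [intervalIntegrable_iff_integrableOn_Ioc_of_le hT.le]
  apply Integrable.mono'
    ((intervalIntegrable_iff_integrableOn_Ioc_of_le hT.le).mp
      (intervalIntegrable_rpow' (by linarith : (-1:ℝ) < s - 1)))
  · exact (((continuousOn_cpow_real _).mul
      (continuous_exp_neg_mul l).continuousOn).mono Ioc_subset_Ioi_self).aestronglyMeasurable
      measurableSet_Ioc
  · exact (ae_restrict_iff' measurableSet_Ioc).2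
      (Filter.Eventually.of_forall fun y hy => norm_F_le hl hy.1)

lemma intervalIntegrable_G {s b : ℝ} (hs0 : 0 < s) (hs1 : s < 1) (hb : 0 < b) {l : ℂ}
    (hl : 0 ≤ l.re) (hl0 : l ≠ 0) (hlb : b ≤ ‖l‖) {T : ℝ} (hT : 0 < T) :
    IntervalIntegrable (fun y : ℝ => (y:ℂ) ^ ((s:ℂ) - 2) * A l y) volume 0 T := by
  rw [intervalIntegrable_iff_integrableOn_Ioc_of_le hT.le]
  exact (integrableOn_G hs0 hs1 hb hl hl0 hlb).mono_set Ioc_subset_Ioi_self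

/-- Integration by parts identity on `(0,T]`. -/
lemma ibp {s b : ℝ} (hs0 : 0 < s) (hs1 : s < 1) (hb : 0 < b) {l : ℂ}
    (hl : 0 ≤ l.re) (hl0 : l ≠ 0) (hlb : b ≤ ‖l‖) {T : ℝ} (hT : 0 < T) :
    ∫ y in (0:ℝ)..T, (y:ℂ) ^ ((s:ℂ) - 1) * Complex.exp (-(l * y))
      = (T:ℂ) ^ ((s:ℂ) - 1) * A l T
        - ((s:ℂ) - 1) * ∫ y in (0:ℝ)..T, (y:ℂ) ^ ((s:ℂ) - 2) * A l y := by
  set F : ℝ → ℂ := fun y => (y:ℂ) ^ ((s:ℂ) - 1) * Complex.exp (-(l * y)) with hF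
  set G : ℝ → ℂ := fun y => (y:ℂ) ^ ((s:ℂ) - 2) * A l y with hG
  have hFi : IntervalIntegrable F volume 0 T := intervalIntegrable_F hs0 hl hT
  have hGi : IntervalIntegrable G volume 0 T := intervalIntegrable_G hs0 hs1 hb hl hl0 hlb hT
  have hne : ((s:ℂ) - 1) ≠ 0 := sub_one_ne_zero_c hs1
  -- identity on c..T for 0 < c
  have hid : ∀ c : ℝ, c ∈ Ioo (0:ℝ) T →
      ∫ y in c..T, F y = ((T:ℂ) ^ ((s:ℂ) - 1) * A l T - (c:ℂ) ^ ((s:ℂ) - 1) * A l c)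
        - ((s:ℂ) - 1) * ∫ y in c..T, G y := by
    intro c hc
    have huIcc : uIcc c T ⊆ Ioi 0 := by
      rw [uIcc_of_le hc.2.le]
      exact fun z hz => lt_of_lt_of_le hc.1 hz.1
    have h := intervalIntegral.integral_mul_deriv_eq_deriv_mul
      (u := fun y : ℝ => (y:ℂ) ^ ((s:ℂ) - 1))
      (u' := fun y : ℝ => ((s:ℂ) - 1) * (y:ℂ) ^ ((s:ℂ) - 2))
      (v := A l) (v' := fun y : ℝ => Complex.exp (-(l * y)))
      (fun y hy => by
        have := hasDerivAt_cpow_real (p := (s:ℂ) - 1) hne (huIcc hy)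
        simpa [show (s:ℂ) - 1 - 1 = (s:ℂ) - 2 by ring] using this)
      (fun y _ => hasDerivAt_A l hl0 y)
      (((continuousOn_cpow_real ((s:ℂ) - 2)).mono huIcc).const_smul ((s:ℂ) - 1)
        |>.intervalIntegrable)
      ((continuous_exp_neg_mul l).continuousOn.intervalIntegrable)
    simp only [mul_assoc] at h
    rw [intervalIntegral.integral_const_mul] at h
    exact h
  -- limits as c → 0⁺
  have hmem : Ioo (0:ℝ) T ∈ 𝓝[>] (0:ℝ) := Ioo_mem_nhdsGT_of_mem ⟨le_refl 0, hT⟩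
  have hsmallF : Tendsto (fun c => ∫ y in (0:ℝ)..c, F y) (𝓝[>] (0:ℝ)) (𝓝 0) :=
    tendsto_small hs0 hs1 F (fun y hy => norm_F_le hl hy)
      (fun c hc => intervalIntegrable_F hs0 hl hc)
  have hsmallG : Tendsto (fun c => ∫ y in (0:ℝ)..c, G y) (𝓝[>] (0:ℝ)) (𝓝 0) :=
    tendsto_small hs0 hs1 G (fun y hy => norm_G_le' hb hl hl0 hy)
      (fun c hc => intervalIntegrable_G hs0 hs1 hb hl hl0 hlb hc)
  have hsplitF : ∀ᶠ c in 𝓝[>] (0:ℝ),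
      ∫ y in c..T, F y = (∫ y in (0:ℝ)..T, F y) - ∫ y in (0:ℝ)..c, F y := by
    filter_upwards [hmem] with c hc
    have h1 : IntervalIntegrable F volume 0 c :=
      hFi.mono_set (by rw [uIcc_of_le hc.1.le, uIcc_of_le hT.le]; exact Icc_subset_Icc le_rfl hc.2.le)
    have h2 : IntervalIntegrable F volume c T :=
      hFi.mono_set (by rw [uIcc_of_le hc.2.le, uIcc_of_le hT.le]; exact Icc_subset_Icc hc.1.le le_rfl)
    have := intervalIntegral.integral_add_adjacent_intervals h1 h2
    linear_combination this
  have hsplitG : ∀ᶠ c in 𝓝[>] (0:ℝ),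
      ∫ y in c..T, G y = (∫ y in (0:ℝ)..T, G y) - ∫ y in (0:ℝ)..c, G y := by
    filter_upwards [hmem] with c hc
    have h1 : IntervalIntegrable G volume 0 c :=
      hGi.mono_set (by rw [uIcc_of_le hc.1.le, uIcc_of_le hT.le]; exact Icc_subset_Icc le_rfl hc.2.le)
    have h2 : IntervalIntegrable G volume c T :=
      hGi.mono_set (by rw [uIcc_of_le hc.2.le, uIcc_of_le hT.le]; exact Icc_subset_Icc hc.1.le le_rfl)
    have := intervalIntegral.integral_add_adjacent_intervals h1 h2
    linear_combination this
  -- boundary term at c tends to zero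
  have hbdry : Tendsto (fun c : ℝ => (c:ℂ) ^ ((s:ℂ) - 1) * A l c) (𝓝[>] (0:ℝ)) (𝓝 0) := by
    rw [tendsto_zero_iff_norm_tendsto_zero]
    have hbound : ∀ᶠ (c : ℝ) in 𝓝[>] (0:ℝ), ‖(c:ℂ) ^ ((s:ℂ) - 1) * A l c‖ ≤ c ^ s := by
      filter_upwards [self_mem_nhdsWithin] with c hc
      have hc0 : (0:ℝ) < c := hc
      calc ‖(c:ℂ) ^ ((s:ℂ) - 1) * A l c‖ ≤ c ^ (s - 1) * c := by
            rw [norm_mul, show ((s:ℂ) - 1) = ((s - 1 : ℝ) : ℂ) by push_cast; ring,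
              norm_cpow_real hc0]
            exact mul_le_mul_of_nonneg_left
              ((norm_A_le hl hl0 hc0.le).trans (min_le_left _ _)) (Real.rpow_nonneg hc0.le _)
        _ = c ^ s := by rw [← Real.rpow_add_one hc0.ne' (s - 1)]; congr 1; ring
    have h0 : Tendsto (fun c : ℝ => c ^ s) (𝓝[>] (0:ℝ)) (𝓝 0) := by
      have := (Real.continuousAt_rpow_const 0 s (Or.inr hs0.le)).tendsto
      rw [Real.zero_rpow hs0.ne'] at this
      exact this.mono_left nhdsWithin_le_nhds
    exact squeeze_zero' (Filter.Eventually.of_forall fun c => norm_nonneg _) hbound h0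
  have hLHS : Tendsto (fun c => ∫ y in c..T, F y) (𝓝[>] (0:ℝ))
      (𝓝 (∫ y in (0:ℝ)..T, F y)) := by
    rw [show (∫ y in (0:ℝ)..T, F y) = (∫ y in (0:ℝ)..T, F y) - 0 by ring]
    exact Tendsto.congr' (by filter_upwards [hsplitF] with c hc using hc.symm)
      (tendsto_const_nhds.sub hsmallF)
  have hRHS : Tendsto (fun c : ℝ =>
      ((T:ℂ) ^ ((s:ℂ) - 1) * A l T - (c:ℂ) ^ ((s:ℂ) - 1) * A l c)
        - ((s:ℂ) - 1) * ∫ y in c..T, G y) (𝓝[>] (0:ℝ))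
      (𝓝 (((T:ℂ) ^ ((s:ℂ) - 1) * A l T - 0)
        - ((s:ℂ) - 1) * ((∫ y in (0:ℝ)..T, G y) - 0))) := by
    apply Tendsto.sub
    · exact tendsto_const_nhds.sub hbdry
    · apply Tendsto.const_mul
      exact Tendsto.congr' (by filter_upwards [hsplitG] with c hc using hc.symm)
        (tendsto_const_nhds.sub hsmallG)
  have := tendsto_nhds_unique (hLHS.congr' (by filter_upwards [hmem] with c hc using hid c hc))
    hRHS
  rw [this]
  ring


set_option maxHeartbeats 1000000 in
lemma differentiableAt_f {s : ℝ} (hs0 : 0 < s) (hs1 : s < 1) {z : ℂ} (hz : 0 < z.re) :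
    DifferentiableAt ℂ
      (fun w : ℂ => ∫ y in Ioi (0:ℝ), (y:ℂ) ^ ((s:ℂ) - 1) * Complex.exp (-(w * y))) z := by
  have hcast : ((s - 1 : ℝ) : ℂ) = (s:ℂ) - 1 := by push_cast; ring
  have hF_meas : ∀ᶠ w in 𝓝 z, AEStronglyMeasurable
      (fun y : ℝ => (y:ℂ) ^ ((s:ℂ) - 1) * Complex.exp (-(w * y)))
      (volume.restrict (Ioi (0:ℝ))) :=
    Filter.Eventually.of_forall fun w =>
      ((continuousOn_cpow_real _).mul
        (continuous_exp_neg_mul w).continuousOn).aestronglyMeasurable measurableSet_Ioi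
  have hF_int : Integrable (fun y : ℝ => (y:ℂ) ^ ((s:ℂ) - 1) * Complex.exp (-(z * y)))
      (volume.restrict (Ioi (0:ℝ))) := by
    have h := integrableOn_F (p := s - 1) (by linarith) hz
    rw [hcast] at h
    exact h
  have hF'_meas : AEStronglyMeasurable
      (fun y : ℝ => (y:ℂ) ^ ((s:ℂ) - 1) * (Complex.exp (-(z * y)) * (-(y:ℂ))))
      (volume.restrict (Ioi (0:ℝ))) :=
    ((continuousOn_cpow_real _).mul (((continuous_exp_neg_mul z).continuousOn).mul
      ((Complex.continuous_ofReal.neg).continuousOn))).aestronglyMeasurable measurableSet_Ioi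
  have h_bound : ∀ᵐ (y : ℝ) ∂(volume.restrict (Ioi (0:ℝ))), ∀ w ∈ Metric.ball z (z.re / 2),
      ‖(y:ℂ) ^ ((s:ℂ) - 1) * (Complex.exp (-(w * y)) * (-(y:ℂ)))‖
        ≤ y ^ s * Real.exp (-(z.re / 2) * y) := by
    refine (ae_restrict_iff' measurableSet_Ioi).2
      (Filter.Eventually.of_forall fun y hy => fun w hw => ?_)
    have hy0 : (0:ℝ) < y := hy
    have hwre : z.re / 2 ≤ w.re := by
      have h1 : |(w - z).re| ≤ ‖w - z‖ := Complex.abs_re_le_norm _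
      have h2 : ‖w - z‖ < z.re / 2 := by
        rw [← dist_eq_norm]; exact Metric.mem_ball.mp hw
      have := abs_le.mp (h1.trans h2.le)
      simp only [Complex.sub_re] at this
      linarith [this.1]
    rw [norm_mul, show ((s:ℂ) - 1) = ((s - 1 : ℝ) : ℂ) by push_cast; ring,
      norm_cpow_real hy0, norm_mul, norm_neg, Complex.norm_exp,
      Complex.norm_real, Real.norm_eq_abs, abs_of_pos hy0]
    have hre : (-(w * y)).re = -(w.re * y) := by simp
    rw [hre]
    calc y ^ (s - 1) * (Real.exp (-(w.re * y)) * y)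
        = y ^ s * Real.exp (-(w.re * y)) := by
          rw [show y ^ s = y ^ (s - 1 + 1) by congr 1; ring, Real.rpow_add_one hy0.ne']
          ring
      _ ≤ y ^ s * Real.exp (-(z.re / 2) * y) := by
          have hexp : Real.exp (-(w.re * y)) ≤ Real.exp (-(z.re / 2) * y) :=
            Real.exp_le_exp.mpr (by nlinarith)
          exact mul_le_mul_of_nonneg_left hexp (Real.rpow_nonneg hy0.le _)
  have hbi : Integrable (fun y : ℝ => y ^ s * Real.exp (-(z.re / 2) * y))
      (volume.restrict (Ioi (0:ℝ))) :=
    integrableOn_rpow_exp (by linarith) (half_pos hz)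
  have h_diff : ∀ᵐ (y : ℝ) ∂(volume.restrict (Ioi (0:ℝ))), ∀ w ∈ Metric.ball z (z.re / 2),
      HasDerivAt (fun w : ℂ => (y:ℂ) ^ ((s:ℂ) - 1) * Complex.exp (-(w * y)))
        ((y:ℂ) ^ ((s:ℂ) - 1) * (Complex.exp (-(w * y)) * (-(y:ℂ)))) w :=
    Filter.Eventually.of_forall fun y => fun w _ => by
      have h3 : HasDerivAt (fun w : ℂ => -(w * (y:ℂ))) (-(y:ℂ)) w := by
        simpa [Pi.neg_def] using ((hasDerivAt_id w).mul_const (y:ℂ)).neg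
      have h4 := (Complex.hasDerivAt_exp (-(w * (y:ℂ)))).comp w h3
      exact h4.const_mul _
  have hd := (_root_.hasDerivAt_integral_of_dominated_loc_of_deriv_le
    (𝕜 := ℂ) (μ := volume.restrict (Ioi (0:ℝ)))
    (F := fun (w : ℂ) (y : ℝ) => (y:ℂ) ^ ((s:ℂ) - 1) * Complex.exp (-(w * y)))
    (F' := fun (w : ℂ) (y : ℝ) => (y:ℂ) ^ ((s:ℂ) - 1) * (Complex.exp (-(w * y)) * (-(y:ℂ))))
    (x₀ := z) (bound := fun y => y ^ s * Real.exp (-(z.re / 2) * y))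
    (Metric.ball_mem_nhds z (half_pos hz)) hF_meas hF_int hF'_meas h_bound hbi h_diff).2
  exact hd.differentiableAt

/-- Gamma integral for complex parameter with positive real part. -/
lemma gamma_identity {s : ℝ} (hs0 : 0 < s) (hs1 : s < 1) {l : ℂ} (hl : 0 < l.re) :
    ∫ y in Ioi (0:ℝ), (y:ℂ) ^ ((s:ℂ) - 1) * Complex.exp (-(l * y))
      = Complex.Gamma s * l ^ (-(s:ℂ)) := by
  set f : ℂ → ℂ := fun w => ∫ y in Ioi (0:ℝ), (y:ℂ) ^ ((s:ℂ) - 1) * Complex.exp (-(w * y))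
    with hf
  set g : ℂ → ℂ := fun w => Complex.Gamma s * w ^ (-(s:ℂ)) with hg
  have hU : IsOpen {z : ℂ | 0 < z.re} := isOpen_lt continuous_const Complex.continuous_re
  have hfd : DifferentiableOn ℂ f {z : ℂ | 0 < z.re} := fun z hz =>
    (differentiableAt_f hs0 hs1 hz).differentiableWithinAt
  have hfa : AnalyticOnNhd ℂ f {z : ℂ | 0 < z.re} := hfd.analyticOnNhd hU
  have hga : AnalyticOnNhd ℂ g {z : ℂ | 0 < z.re} := by
    apply DifferentiableOn.analyticOnNhd _ hU
    intro z hz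
    have h0 : (id z : ℂ) ∈ Complex.slitPlane := Complex.mem_slitPlane_iff.mpr (Or.inl hz)
    exact (((hasDerivAt_id z).cpow_const h0).differentiableAt.const_mul
      (Complex.Gamma s)).differentiableWithinAt
  have hfr : ∀ r : ℝ, 0 < r → f ((r:ℂ)) = g ((r:ℂ)) := by
    intro r hr
    have h := Complex.integral_cpow_mul_exp_neg_mul_Ioi (a := (s:ℂ)) (by simpa using hs0) hr
    have harg : ((r:ℂ)).arg ≠ Real.pi := by
      rw [Complex.arg_ofReal_of_nonneg hr.le]
      exact Real.pi_ne_zero.symm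
    rw [hf, hg]
    simp only
    rw [h, one_div, Complex.inv_cpow _ _ harg, ← Complex.cpow_neg]
    ring
  have hfreq : ∃ᶠ z in 𝓝[≠] (1:ℂ), f z = g z := by
    have hseq : Tendsto (fun n : ℕ => ((1 + 1 / ((n:ℝ) + 1) : ℝ) : ℂ)) atTop (𝓝[≠] (1:ℂ)) := by
      rw [tendsto_nhdsWithin_iff]
      constructor
      · have h1 : Tendsto (fun n : ℕ => (1 + 1 / ((n:ℝ) + 1) : ℝ)) atTop (𝓝 1) := by
          simpa using (tendsto_const_nhds (x := (1:ℝ))).add tendsto_one_div_add_atTop_nhds_zero_nat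
        have := (Complex.continuous_ofReal.tendsto 1).comp h1
        simpa [Function.comp_def] using this
      · refine Filter.Eventually.of_forall fun n => ?_
        simp only [mem_compl_iff, mem_singleton_iff]
        intro hcon
        have : (1 + 1 / ((n:ℝ) + 1) : ℝ) = 1 := by exact_mod_cast hcon
        have hpos : (0:ℝ) < 1 / ((n:ℝ) + 1) := by positivity
        linarith
    exact hseq.frequently (Filter.Eventually.of_forall fun n =>
      hfr _ (by positivity)).frequently
  have heq := hfa.eqOn_of_preconnected_of_frequently_eq hga
    (convex_halfSpace_re_gt 0).isPreconnected (by simp : (1:ℂ) ∈ {z : ℂ | 0 < z.re}) hfreq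
  exact heq hl


lemma tendsto_boundary {s b : ℝ} (hs1 : s < 1) (hb : 0 < b) {l : ℂ}
    (hl : 0 ≤ l.re) (hl0 : l ≠ 0) (hlb : b ≤ ‖l‖) :
    Tendsto (fun T : ℝ => (T:ℂ) ^ ((s:ℂ) - 1) * A l T) atTop (𝓝 0) := by
  have hev : ∀ᶠ T : ℝ in atTop, ‖(T:ℂ) ^ ((s:ℂ) - 1) * A l T‖ ≤ T ^ (s - 1) * (2 / b) := by
    filter_upwards [eventually_gt_atTop (0:ℝ)] with T hT
    rw [norm_mul, show ((s:ℂ) - 1) = ((s - 1 : ℝ) : ℂ) by push_cast; ring, norm_cpow_real hT]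
    refine mul_le_mul_of_nonneg_left ?_ (Real.rpow_nonneg hT.le _)
    refine ((norm_A_le hl hl0 hT.le).trans (min_le_right _ _)).trans ?_
    gcongr
  have htend : Tendsto (fun T : ℝ => T ^ (s - 1) * (2 / b)) atTop (𝓝 0) := by
    have h0 : Tendsto (fun T : ℝ => T ^ (s - 1)) atTop (𝓝 0) := by
      have := tendsto_rpow_neg_atTop (y := 1 - s) (by linarith)
      simpa [show -(1 - s) = s - 1 by ring] using this
    simpa using h0.mul_const (2 / b)
  exact squeeze_zero_norm' hev htend

/-- For `Re l > 0`, the absolutely convergent IBP form equals the Gamma value. -/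
lemma J_eq {s b : ℝ} (hs0 : 0 < s) (hs1 : s < 1) (hb : 0 < b) {l : ℂ}
    (hl : 0 < l.re) (hlb : b ≤ ‖l‖) :
    -((s:ℂ) - 1) * (∫ y in Ioi (0:ℝ), (y:ℂ) ^ ((s:ℂ) - 2) * A l y)
      = Complex.Gamma s * l ^ (-(s:ℂ)) := by
  have hl0 : l ≠ 0 := by
    intro h; rw [h] at hl; simp at hl
  have h1 : Tendsto (fun T : ℝ => ∫ y in (0:ℝ)..T, (y:ℂ) ^ ((s:ℂ) - 1)
      * Complex.exp (-(l * y))) atTop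
      (𝓝 (∫ y in Ioi (0:ℝ), (y:ℂ) ^ ((s:ℂ) - 1) * Complex.exp (-(l * y)))) := by
    apply intervalIntegral_tendsto_integral_Ioi 0 _ tendsto_id
    have h := integrableOn_F (p := s - 1) (by linarith) hl
    rwa [show ((s - 1 : ℝ) : ℂ) = (s:ℂ) - 1 by push_cast; ring] at h
  have h3 : Tendsto (fun T : ℝ => ∫ y in (0:ℝ)..T, (y:ℂ) ^ ((s:ℂ) - 2) * A l y) atTop
      (𝓝 (∫ y in Ioi (0:ℝ), (y:ℂ) ^ ((s:ℂ) - 2) * A l y)) :=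
    intervalIntegral_tendsto_integral_Ioi 0 (integrableOn_G hs0 hs1 hb hl.le hl0 hlb) tendsto_id
  have h4 : ∀ᶠ T : ℝ in atTop, ∫ y in (0:ℝ)..T, (y:ℂ) ^ ((s:ℂ) - 1) * Complex.exp (-(l * y))
      = (T:ℂ) ^ ((s:ℂ) - 1) * A l T
        - ((s:ℂ) - 1) * ∫ y in (0:ℝ)..T, (y:ℂ) ^ ((s:ℂ) - 2) * A l y := by
    filter_upwards [eventually_gt_atTop (0:ℝ)] with T hT
    exact ibp hs0 hs1 hb hl.le hl0 hlb hT
  have h5 := (tendsto_boundary hs1 hb hl.le hl0 hlb).sub (h3.const_mul ((s:ℂ) - 1))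
  have h6 := tendsto_nhds_unique (h1.congr' (by filter_upwards [h4] with T hT using hT)) h5
  rw [gamma_identity hs0 hs1 hl] at h6
  rw [h6]
  ring

lemma J_cont {s b : ℝ} (hs0 : 0 < s) (hs1 : s < 1) (hb : 0 < b) :
    Tendsto (fun e : ℝ => ∫ y in Ioi (0:ℝ), (y:ℂ) ^ ((s:ℂ) - 2) * A ((e:ℂ) + b * Complex.I) y)
      (𝓝[>] (0:ℝ))
      (𝓝 (∫ y in Ioi (0:ℝ), (y:ℂ) ^ ((s:ℂ) - 2) * A ((b:ℂ) * Complex.I) y)) := by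
  have hbI0 : (b:ℂ) * Complex.I ≠ 0 := by
    simp [Complex.ext_iff, hb.ne']
  have hkey : ∀ e : ℝ, 0 ≤ e → ((e:ℂ) + b * Complex.I) ≠ 0 ∧ b ≤ ‖(e:ℂ) + b * Complex.I‖
      ∧ 0 ≤ ((e:ℂ) + b * Complex.I).re := by
    intro e he
    have him : ((e:ℂ) + b * Complex.I).im = b := by simp
    refine ⟨?_, ?_, by simp [he]⟩
    · intro h
      have := congrArg Complex.im h
      rw [him] at this
      simp at this
      linarith
    · have := Complex.abs_im_le_norm ((e:ℂ) + b * Complex.I)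
      rw [him, abs_of_pos hb] at this
      exact this
  apply MeasureTheory.tendsto_integral_filter_of_dominated_convergence
    (bound := fun y : ℝ => y ^ (s - 2) * min y (2 / b))
  · filter_upwards [self_mem_nhdsWithin] with e he
    apply ContinuousOn.aestronglyMeasurable _ measurableSet_Ioi
    exact (continuousOn_cpow_real _).mul
      (((continuous_const.sub (continuous_exp_neg_mul _)).div_const _).continuousOn)
  · filter_upwards [self_mem_nhdsWithin] with e he
    have he0 : (0:ℝ) < e := he
    obtain ⟨h1, h2, h3⟩ := hkey e he0.le
    exact (ae_restrict_iff' measurableSet_Ioi).2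
      (Filter.Eventually.of_forall fun y hy => norm_G_le hb h3 h1 h2 hy)
  · exact integrable_bound hs0 hs1 hb
  · refine (ae_restrict_iff' measurableSet_Ioi).2 (Filter.Eventually.of_forall fun y hy => ?_)
    have hy0 : (0:ℝ) < y := hy
    have htend : Tendsto (fun e : ℝ => (e:ℂ) + b * Complex.I) (𝓝[>] (0:ℝ))
        (𝓝 ((b:ℂ) * Complex.I)) := by
      have := (Complex.continuous_ofReal.tendsto 0).add (tendsto_const_nhds
        (x := (b:ℂ) * Complex.I))
      simp only [Complex.ofReal_zero, zero_add] at this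
      exact this.mono_left nhdsWithin_le_nhds
    have hcont : ContinuousAt (fun w : ℂ => (y:ℂ) ^ ((s:ℂ) - 2)
        * ((1 - Complex.exp (-(w * y))) / w)) ((b:ℂ) * Complex.I) := by
      apply ContinuousAt.mul continuousAt_const
      exact ContinuousAt.div (by fun_prop) continuousAt_id hbI0
    exact hcont.tendsto.comp htend

/-- The main complex limit. -/
lemma key_complex {s b : ℝ} (hs0 : 0 < s) (hs1 : s < 1) (hb : 0 < b) :
    Tendsto (fun T : ℝ => ∫ y in (0:ℝ)..T,
        (y:ℂ) ^ ((s:ℂ) - 1) * Complex.exp (-((b:ℂ) * Complex.I * y))) atTop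
      (𝓝 (Complex.Gamma s * ((b:ℂ) * Complex.I) ^ (-(s:ℂ)))) := by
  have hbI0 : (b:ℂ) * Complex.I ≠ 0 := by simp [Complex.ext_iff, hb.ne']
  have hre : ((b:ℂ) * Complex.I).re = 0 := by simp
  have hnorm : b ≤ ‖(b:ℂ) * Complex.I‖ := by
    rw [norm_mul, Complex.norm_I, Complex.norm_real, Real.norm_eq_abs, abs_of_pos hb]
    simp
  -- the limit value via epsilon regularization
  have hval : -((s:ℂ) - 1) * (∫ y in Ioi (0:ℝ), (y:ℂ) ^ ((s:ℂ) - 2) * A ((b:ℂ) * Complex.I) y)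
      = Complex.Gamma s * ((b:ℂ) * Complex.I) ^ (-(s:ℂ)) := by
    have hA : Tendsto (fun e : ℝ => -((s:ℂ) - 1)
        * ∫ y in Ioi (0:ℝ), (y:ℂ) ^ ((s:ℂ) - 2) * A ((e:ℂ) + b * Complex.I) y) (𝓝[>] (0:ℝ))
        (𝓝 (-((s:ℂ) - 1)
          * ∫ y in Ioi (0:ℝ), (y:ℂ) ^ ((s:ℂ) - 2) * A ((b:ℂ) * Complex.I) y)) :=
      (J_cont hs0 hs1 hb).const_mul _
    have hB : Tendsto (fun e : ℝ => Complex.Gamma s * ((e:ℂ) + b * Complex.I) ^ (-(s:ℂ)))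
        (𝓝[>] (0:ℝ)) (𝓝 (Complex.Gamma s * ((b:ℂ) * Complex.I) ^ (-(s:ℂ)))) := by
      have htend : Tendsto (fun e : ℝ => (e:ℂ) + b * Complex.I) (𝓝[>] (0:ℝ))
          (𝓝 ((b:ℂ) * Complex.I)) := by
        have := (Complex.continuous_ofReal.tendsto 0).add (tendsto_const_nhds
          (x := (b:ℂ) * Complex.I))
        simp only [Complex.ofReal_zero, zero_add] at this
        exact this.mono_left nhdsWithin_le_nhds
      have hcont : ContinuousAt (fun w : ℂ => w ^ (-(s:ℂ))) ((b:ℂ) * Complex.I) :=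
        continuousAt_cpow_const (Complex.mem_slitPlane_iff.mpr
          (Or.inr (by simp [hb.ne'])))
      exact (hcont.tendsto.comp htend).const_mul _
    have heq : ∀ᶠ e : ℝ in 𝓝[>] (0:ℝ), -((s:ℂ) - 1)
        * (∫ y in Ioi (0:ℝ), (y:ℂ) ^ ((s:ℂ) - 2) * A ((e:ℂ) + b * Complex.I) y)
        = Complex.Gamma s * ((e:ℂ) + b * Complex.I) ^ (-(s:ℂ)) := by
      filter_upwards [self_mem_nhdsWithin] with e he
      have he0 : (0:ℝ) < e := he
      have hrepos : 0 < ((e:ℂ) + b * Complex.I).re := by simp [he0]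
      have hnorm' : b ≤ ‖(e:ℂ) + b * Complex.I‖ := by
        have him : ((e:ℂ) + b * Complex.I).im = b := by simp
        have := Complex.abs_im_le_norm ((e:ℂ) + b * Complex.I)
        rw [him, abs_of_pos hb] at this
        exact this
      exact J_eq hs0 hs1 hb hrepos hnorm'
    exact tendsto_nhds_unique (hA.congr' heq) hB
  -- now the T → ∞ limit
  have h3 : Tendsto (fun T : ℝ => ∫ y in (0:ℝ)..T, (y:ℂ) ^ ((s:ℂ) - 2)
      * A ((b:ℂ) * Complex.I) y) atTop
      (𝓝 (∫ y in Ioi (0:ℝ), (y:ℂ) ^ ((s:ℂ) - 2) * A ((b:ℂ) * Complex.I) y)) :=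
    intervalIntegral_tendsto_integral_Ioi 0
      (integrableOn_G hs0 hs1 hb (le_of_eq hre.symm) hbI0 hnorm) tendsto_id
  have h5 := (tendsto_boundary hs1 hb (le_of_eq hre.symm) hbI0 hnorm).sub
    (h3.const_mul ((s:ℂ) - 1))
  have h4 : ∀ᶠ T : ℝ in atTop, (T:ℂ) ^ ((s:ℂ) - 1) * A ((b:ℂ) * Complex.I) T
        - ((s:ℂ) - 1) * (∫ y in (0:ℝ)..T, (y:ℂ) ^ ((s:ℂ) - 2) * A ((b:ℂ) * Complex.I) y)
      = ∫ y in (0:ℝ)..T, (y:ℂ) ^ ((s:ℂ) - 1) * Complex.exp (-((b:ℂ) * Complex.I * y)) := by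
    filter_upwards [eventually_gt_atTop (0:ℝ)] with T hT
    exact (ibp hs0 hs1 hb (le_of_eq hre.symm) hbI0 hnorm hT).symm
  have := h5.congr' h4
  rw [← hval]
  convert this using 2
  ring


lemma re_intervalIntegral {f : ℝ → ℂ} {a c : ℝ} (hf : IntervalIntegrable f volume a c) :
    (∫ y in a..c, f y).re = ∫ y in a..c, (f y).re := by
  rw [intervalIntegral, intervalIntegral, Complex.sub_re]
  have h1 := integral_re hf.1
  have h2 := integral_re hf.2
  simp only [RCLike.re_to_complex] at h1 h2
  rw [h1, h2]

end FracAux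

open FracAux in
theorem left_fractional_integral_cos' (α b x : ℝ) (hα : α ∈ Set.Ioo (1 : ℝ) 2) (hb : 0 < b) :
    Tendsto (fun T : ℝ => ∫ y in (0 : ℝ)..T, Real.cos (b * (x - y)) * y ^ (1 - α)) atTop
      (𝓝 (Real.Gamma (2 - α) / b ^ (2 - α) *
        (Real.cos (b * x) * Real.cos (Real.pi * (2 - α) / 2) +
          Real.sin (b * x) * Real.sin (Real.pi * (2 - α) / 2)))) := by
  obtain ⟨ha1, ha2⟩ := hα
  set s : ℝ := 2 - α with hsdef
  have hs0 : 0 < s := by rw [hsdef]; linarith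
  have hs1 : s < 1 := by rw [hsdef]; linarith
  have hbI0 : (b:ℂ) * Complex.I ≠ 0 := by simp [Complex.ext_iff, hb.ne']
  have hre0 : (0:ℝ) ≤ ((b:ℂ) * Complex.I).re := by simp
  have hkey := key_complex (s := s) hs0 hs1 hb
  -- multiply by the constant and take real parts
  have hkey2 : Tendsto (fun T : ℝ => (Complex.exp (((b * x : ℝ) : ℂ) * Complex.I) *
      ∫ y in (0:ℝ)..T, (y:ℂ) ^ ((s:ℂ) - 1) * Complex.exp (-((b:ℂ) * Complex.I * y))).re) atTop
      (𝓝 ((Complex.exp (((b * x : ℝ) : ℂ) * Complex.I) *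
        (Complex.Gamma s * ((b:ℂ) * Complex.I) ^ (-(s:ℂ)))).re)) :=
    (Complex.continuous_re.tendsto _).comp (hkey.const_mul _)
  -- pointwise identity
  have hpt : ∀ y : ℝ, 0 ≤ y → Real.cos (b * (x - y)) * y ^ (1 - α)
      = (Complex.exp (((b * x : ℝ) : ℂ) * Complex.I) *
        ((y:ℂ) ^ ((s:ℂ) - 1) * Complex.exp (-((b:ℂ) * Complex.I * y)))).re := by
    intro y hy
    rcases eq_or_lt_of_le hy with h | h
    · rw [← h]
      rw [Real.zero_rpow (by intro hc; rw [hsdef] at hs1; linarith [hc] : (1 - α : ℝ) ≠ 0)]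
      rw [show ((0:ℝ):ℂ) = (0:ℂ) by norm_num, Complex.zero_cpow (sub_one_ne_zero_c hs1)]
      simp
    · have hcpow : (y:ℂ) ^ ((s:ℂ) - 1) = ((y ^ (s - 1) : ℝ) : ℂ) := by
        rw [show ((s:ℂ) - 1) = ((s - 1 : ℝ) : ℂ) by push_cast; ring]
        exact (Complex.ofReal_cpow h.le _).symm
      have hexp : Complex.exp (((b * x : ℝ) : ℂ) * Complex.I)
          * Complex.exp (-((b:ℂ) * Complex.I * y))
          = Complex.exp (((b * (x - y) : ℝ) : ℂ) * Complex.I) := by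
        rw [← Complex.exp_add]; congr 1; push_cast; ring
      rw [hcpow, show Complex.exp (((b * x : ℝ) : ℂ) * Complex.I) *
          (((y ^ (s - 1) : ℝ) : ℂ) * Complex.exp (-((b:ℂ) * Complex.I * y)))
          = ((y ^ (s - 1) : ℝ) : ℂ) * Complex.exp (((b * (x - y) : ℝ) : ℂ) * Complex.I) by
        rw [← hexp]; ring]
      rw [Complex.re_ofReal_mul, Complex.exp_ofReal_mul_I_re]
      rw [show (1 - α : ℝ) = s - 1 by rw [hsdef]; ring]
      ring
  -- the functions agree eventually
  have hfun : ∀ᶠ T : ℝ in atTop, (∫ y in (0:ℝ)..T, Real.cos (b * (x - y)) * y ^ (1 - α))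
      = (Complex.exp (((b * x : ℝ) : ℂ) * Complex.I) *
        ∫ y in (0:ℝ)..T, (y:ℂ) ^ ((s:ℂ) - 1) * Complex.exp (-((b:ℂ) * Complex.I * y))).re := by
    filter_upwards [eventually_gt_atTop (0:ℝ)] with T hT
    rw [← intervalIntegral.integral_const_mul,
      re_intervalIntegral ((intervalIntegrable_F hs0 hre0 hT).const_mul _)]
    apply intervalIntegral.integral_congr
    intro y hy
    rw [uIcc_of_le hT.le] at hy
    exact hpt y hy.1
  -- the constant
  have hconst : (Complex.exp (((b * x : ℝ) : ℂ) * Complex.I) *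
      (Complex.Gamma s * ((b:ℂ) * Complex.I) ^ (-(s:ℂ)))).re
      = Real.Gamma s / b ^ s *
        (Real.cos (b * x) * Real.cos (Real.pi * s / 2) +
          Real.sin (b * x) * Real.sin (Real.pi * s / 2)) := by
    have hlog : Complex.log ((b:ℂ) * Complex.I)
        = ((Real.log b : ℝ) : ℂ) + ((Real.pi / 2 : ℝ) : ℂ) * Complex.I := by
      apply Complex.ext
      · rw [Complex.log_re]
        simp [map_mul, Complex.norm_real, abs_of_pos hb]
      · rw [Complex.log_im]
        rw [Complex.arg_eq_pi_div_two_iff.mpr (by constructor <;> simp [hb])]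
        simp
    have hpow : ((b:ℂ) * Complex.I) ^ (-(s:ℂ))
        = ((b ^ (-s) : ℝ) : ℂ) * Complex.exp (((-(Real.pi * s / 2) : ℝ) : ℂ) * Complex.I) := by
      rw [Complex.cpow_def_of_ne_zero hbI0, hlog]
      rw [show (((Real.log b : ℝ) : ℂ) + ((Real.pi / 2 : ℝ) : ℂ) * Complex.I) * -(s:ℂ)
          = ((-s * Real.log b : ℝ) : ℂ) + ((-(Real.pi * s / 2) : ℝ) : ℂ) * Complex.I by
        push_cast; ring]
      rw [Complex.exp_add]
      congr 1
      rw [← Complex.ofReal_exp]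
      congr 1
      rw [Real.rpow_def_of_pos hb]
      ring_nf
    have hmerge : Complex.exp (((b * x : ℝ) : ℂ) * Complex.I)
        * Complex.exp (((-(Real.pi * s / 2) : ℝ) : ℂ) * Complex.I)
        = Complex.exp (((b * x - Real.pi * s / 2 : ℝ) : ℂ) * Complex.I) := by
      rw [← Complex.exp_add]; congr 1; push_cast; ring
    have hz : Complex.exp (((b * x : ℝ) : ℂ) * Complex.I) *
        (Complex.Gamma s * (((b ^ (-s) : ℝ) : ℂ)
          * Complex.exp (((-(Real.pi * s / 2) : ℝ) : ℂ) * Complex.I)))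
        = ((Real.Gamma s * b ^ (-s) : ℝ) : ℂ)
          * Complex.exp (((b * x - Real.pi * s / 2 : ℝ) : ℂ) * Complex.I) := by
      rw [← hmerge, Complex.Gamma_ofReal]; push_cast; ring
    rw [hpow, hz, Complex.re_ofReal_mul, Complex.exp_ofReal_mul_I_re, Real.cos_sub]
    rw [Real.rpow_neg hb.le]
    field_simp
  rw [show Real.Gamma (2 - α) / b ^ (2 - α) *
      (Real.cos (b * x) * Real.cos (Real.pi * (2 - α) / 2) +
        Real.sin (b * x) * Real.sin (Real.pi * (2 - α) / 2))
      = Real.Gamma s / b ^ s *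
      (Real.cos (b * x) * Real.cos (Real.pi * s / 2) +
        Real.sin (b * x) * Real.sin (Real.pi * s / 2)) by rw [hsdef]]
  rw [← hconst]
  exact hkey2.congr' (by filter_upwards [hfun] with T hT using hT.symm)


/-- For `α ∈ (1,2)`, `b > 0` and `x ∈ ℝ`, the improper integral
`∫_0^∞ cos(b(x-y)) y^{1-α} dy` exists and equals
`(Γ(2-α)/b^{2-α}) (cos(bx) cos(π(2-α)/2) + sin(bx) sin(π(2-α)/2))`. -/
theorem left_fractional_integral_cos (α b x : ℝ) (hα : α ∈ Set.Ioo (1 : ℝ) 2) (hb : 0 < b) :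
    Tendsto (fun T : ℝ => ∫ y in (0 : ℝ)..T, Real.cos (b * (x - y)) * y ^ (1 - α)) atTop
      (𝓝 (Real.Gamma (2 - α) / b ^ (2 - α) *
        (Real.cos (b * x) * Real.cos (Real.pi * (2 - α) / 2) +
          Real.sin (b * x) * Real.sin (Real.pi * (2 - α) / 2)))) :=
  left_fractional_integral_cos' α b x hα hb
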